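/- Every maximally symmetric matrix M on (ℝⁿ)^{⊗ℓ} admits a P-representation: there exists a square-integrable function P_M on S^{n-1} such that M = ∫_{S^{n-1}} P_M(x) |x⟩⟨x|^{⊗ℓ} dx. -/

import Mathlib

open MeasureTheory Real

/-- The Gegenbauer polynomial (in dimension `n`) given by the Rodrigues formula. -/
noncomputable def gegenbauerP (n j : ℕ) (t : ℝ) : ℝ :=
  (-(1 : ℝ) / 2) ^ j * (Real.Gamma (((n : ℝ) - 1) / 2) / Real.Gamma ((j : ℝ) + ((n : ℝ) - 1) / 2)) *
    (1 - t ^ 2) ^ (-(((n : ℝ) - 3) / 2)) *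
    iteratedDeriv j (fun s : ℝ => (1 - s ^ 2) ^ ((j : ℝ) + ((n : ℝ) - 3) / 2)) t

/-- The Funk–Hecke coefficient `λ(n,ℓ,j) = ∫₋₁¹ t^(2ℓ) P_j(t) (1-t²)^((n-3)/2) dt`. -/
noncomputable def lamFH (n ℓ j : ℕ) : ℝ :=
  ∫ t in (-1 : ℝ)..(1 : ℝ), t ^ (2 * ℓ) * gegenbauerP n j t * (1 - t ^ 2) ^ (((n : ℝ) - 3) / 2)

/-- `ω_n = 2π^(n/2)/Γ(n/2)`, the surface area of the unit sphere `S^(n-1)`. -/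
noncomputable def omegaS (n : ℕ) : ℝ := 2 * π ^ ((n : ℝ) / 2) / Real.Gamma ((n : ℝ) / 2)

/-- The unit sphere `S^(n-1) ⊆ ℝⁿ`. -/
def USph (n : ℕ) : Type := {x : Fin n → ℝ // ∑ i, x i ^ 2 = 1}

instance (n : ℕ) : MeasurableSpace (USph n) := by unfold USph; infer_instance

/-- The map on the sphere induced by a linear map preserving the quadratic form
(an orthogonal transformation). -/
def orthMap (n : ℕ) (g : (Fin n → ℝ) →ₗ[ℝ] (Fin n → ℝ))
    (hg : ∀ x : Fin n → ℝ, ∑ i, g x i ^ 2 = ∑ i, x i ^ 2) : USph n → USph n :=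
  fun x => ⟨g x.1, by rw [hg]; exact x.2⟩

/-- `f : S^(n-1) → ℝ` is a spherical harmonic of degree `j` if it is the restriction to
the sphere of a harmonic homogeneous polynomial of degree `j` on `ℝⁿ`. -/
def IsSphericalHarmonic (n j : ℕ) (f : USph n → ℝ) : Prop :=
  ∃ H : MvPolynomial (Fin n) ℝ, H.IsHomogeneous j ∧
    (∑ i : Fin n, MvPolynomial.pderiv i (MvPolynomial.pderiv i H)) = 0 ∧
    ∀ x : USph n, f x = MvPolynomial.eval x.1 H

/-- The matrix `∫_{S^(n-1)} f(x) |x⟩⟨x|^{⊗ℓ} dμ(x)` on `(ℝⁿ)^{⊗ℓ}`. -/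
noncomputable def SMat (n ℓ : ℕ) (μ : Measure (USph n)) (f : USph n → ℝ) :
    Matrix (Fin ℓ → Fin n) (Fin ℓ → Fin n) ℝ :=
  Matrix.of fun a b => ∫ x : USph n, f x * ((∏ i, x.1 (a i)) * (∏ i, x.1 (b i))) ∂μ

/-- A matrix `M` on `(ℝⁿ)^{⊗ℓ}` is maximally symmetric if its vectorization
`|M⟩ ∈ (ℝⁿ)^{⊗2ℓ}` is invariant under all permutations of the `2ℓ` tensor factors. -/
def MaxSym (n ℓ : ℕ) (M : Matrix (Fin ℓ → Fin n) (Fin ℓ → Fin n) ℝ) : Prop :=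
  ∀ (σ : Equiv.Perm (Fin ℓ ⊕ Fin ℓ)) (f : Fin ℓ ⊕ Fin ℓ → Fin n),
    M ((f ∘ σ) ∘ Sum.inl) ((f ∘ σ) ∘ Sum.inr) = M (f ∘ Sum.inl) (f ∘ Sum.inr)


section AuxStmt12

open Finset

instance (n : ℕ) : TopologicalSpace (USph n) := by unfold USph; infer_instance

lemma sphere_isCompact (n : ℕ) : IsCompact {x : Fin n → ℝ | ∑ i, x i ^ 2 = 1} := by
  rw [Metric.isCompact_iff_isClosed_bounded]
  refine ⟨isClosed_eq (by continuity) continuous_const, ?_⟩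
  apply Metric.isBounded_iff_subset_closedBall 0 |>.mpr
  refine ⟨1, fun x hx => ?_⟩
  simp only [Metric.mem_closedBall, dist_zero_right]
  rw [pi_norm_le_iff_of_nonneg zero_le_one]
  intro i
  rw [Real.norm_eq_abs]
  have h1 : x i ^ 2 ≤ ∑ j, x j ^ 2 :=
    Finset.single_le_sum (f := fun j => x j ^ 2) (fun j _ => sq_nonneg _) (Finset.mem_univ i)
  rw [hx] at h1
  exact (sq_le_one_iff_abs_le_one _).mp h1

instance (n : ℕ) : CompactSpace (USph n) := isCompact_iff_compactSpace.mp (sphere_isCompact n)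

lemma abs_coord_le {n : ℕ} (x : Fin n → ℝ) (h : ∑ i, x i ^ 2 = 1) (i : Fin n) : |x i| ≤ 1 := by
  have h1 : x i ^ 2 ≤ 1 := by
    rw [← h]; exact Finset.single_le_sum (fun j _ => sq_nonneg (x j)) (Finset.mem_univ i)
  exact (sq_le_one_iff_abs_le_one _).mp h1

/-- reflection across the hyperplane orthogonal to `w` -/
noncomputable def reflMap (n : ℕ) (w : Fin n → ℝ) : (Fin n → ℝ) →ₗ[ℝ] (Fin n → ℝ) where
  toFun x := x - ((2 / ∑ i, w i ^ 2) * ∑ i, x i * w i) • w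
  map_add' x y := by
    funext i
    simp only [Pi.add_apply, Pi.sub_apply, Pi.smul_apply, smul_eq_mul, add_mul,
      Finset.sum_add_distrib, mul_add]
    ring
  map_smul' c x := by
    funext i
    simp only [Pi.smul_apply, smul_eq_mul, Pi.sub_apply, RingHom.id_apply, mul_assoc,
      ← Finset.mul_sum]
    ring

lemma refl_norm (n : ℕ) (w : Fin n → ℝ) (hw : (∑ i, w i ^ 2) ≠ 0) (x : Fin n → ℝ) :
    ∑ i, reflMap n w x i ^ 2 = ∑ i, x i ^ 2 := by
  set c : ℝ := ∑ i, w i ^ 2 with hc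
  set s : ℝ := ∑ i, x i * w i with hs
  have : ∀ i, reflMap n w x i ^ 2 = x i ^ 2 - (2 * (2 / c * s)) * (x i * w i)
      + (2 / c * s) ^ 2 * w i ^ 2 := by
    intro i
    show (x i - (2 / c * s) * w i) ^ 2 = _
    ring
  rw [Finset.sum_congr rfl (fun i _ => this i)]
  rw [Finset.sum_add_distrib, Finset.sum_sub_distrib, ← Finset.mul_sum, ← Finset.mul_sum,
    ← hs, ← hc]
  field_simp
  ring

lemma refl_maps (n : ℕ) (u v : Fin n → ℝ) (hu : ∑ i, u i ^ 2 = 1) (hv : ∑ i, v i ^ 2 = 1)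
    (hne : (∑ i, (u - v) i ^ 2) ≠ 0) : reflMap n (u - v) u = v := by
  set w := u - v with hwdef
  have hsw : (∑ i, u i * w i) = 1 - ∑ i, u i * v i := by
    simp only [hwdef, Pi.sub_apply, mul_sub, Finset.sum_sub_distrib, ← sq, hu]
  have hc : (∑ i, w i ^ 2) = 2 * (∑ i, u i * w i) := by
    have : ∀ i, w i ^ 2 = u i ^ 2 - 2 * (u i * v i) + v i ^ 2 := by
      intro i; show (u i - v i) ^ 2 = _; ring
    rw [Finset.sum_congr rfl (fun i _ => this i), Finset.sum_add_distrib,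
      Finset.sum_sub_distrib, ← Finset.mul_sum, hu, hv, hsw]
    ring
  have hs0 : (∑ i, u i * w i) ≠ 0 := by
    intro h; rw [h, mul_zero] at hc; exact hne hc
  have : (2 / (∑ i, w i ^ 2)) * (∑ i, u i * w i) = 1 := by
    rw [hc]; field_simp
  show u - ((2 / ∑ i, w i ^ 2) * ∑ i, u i * w i) • w = v
  rw [this, one_smul, hwdef]
  abel

/-- transitivity of the orthogonal group on the sphere -/
lemma exists_orth (n : ℕ) (u v : Fin n → ℝ) (hu : ∑ i, u i ^ 2 = 1) (hv : ∑ i, v i ^ 2 = 1) :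
    ∃ (g : (Fin n → ℝ) →ₗ[ℝ] (Fin n → ℝ))
      (_ : ∀ x : Fin n → ℝ, ∑ i, g x i ^ 2 = ∑ i, x i ^ 2), g u = v := by
  by_cases hne : (∑ i, (u - v) i ^ 2) = 0
  · refine ⟨LinearMap.id, fun x => rfl, ?_⟩
    have : ∀ i, (u - v) i = 0 := by
      intro i
      have h1 : (u - v) i ^ 2 ≤ ∑ j, (u - v) j ^ 2 :=
        Finset.single_le_sum (f := fun j => (u - v) j ^ 2) (fun j _ => sq_nonneg _)
          (Finset.mem_univ i)
      rw [hne] at h1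
      nlinarith [sq_nonneg ((u - v) i)]
    have huv : u = v := by
      funext i
      have := this i
      simp only [Pi.sub_apply] at this
      linarith
    simpa using huv
  · exact ⟨reflMap n (u - v), refl_norm n (u - v) hne, refl_maps n u v hu hv hne⟩

lemma orthMap_measurable (n : ℕ) (g : (Fin n → ℝ) →ₗ[ℝ] (Fin n → ℝ))
    (hg : ∀ x : Fin n → ℝ, ∑ i, g x i ^ 2 = ∑ i, x i ^ 2) :
    Measurable (orthMap n g hg) := by
  apply Measurable.subtype_mk
  exact (g.continuous_of_finiteDimensional.measurable).comp measurable_subtype_coe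

lemma meas_pos_of_open (n : ℕ) (μ : Measure (USph n)) [IsProbabilityMeasure μ]
    (hinv : ∀ (g : (Fin n → ℝ) →ₗ[ℝ] (Fin n → ℝ))
      (hg : ∀ x : Fin n → ℝ, ∑ i, g x i ^ 2 = ∑ i, x i ^ 2),
      Measure.map (orthMap n g hg) μ = μ)
    (S : Set (Fin n → ℝ)) (hS : IsOpen S) (x₀ : USph n) (hx₀ : x₀.1 ∈ S) :
    0 < μ (Subtype.val ⁻¹' S) := by
  set U : Set (USph n) := Subtype.val ⁻¹' S with hU
  have hUmeas : MeasurableSet U := measurable_subtype_coe hS.measurableSet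
  have hch : ∀ y : USph n, ∃ (g : (Fin n → ℝ) →ₗ[ℝ] (Fin n → ℝ))
      (_ : ∀ x : Fin n → ℝ, ∑ i, g x i ^ 2 = ∑ i, x i ^ 2), g y.1 = x₀.1 :=
    fun y => exists_orth n y.1 x₀.1 y.2 x₀.2
  choose g hg hgx using hch
  set O : USph n → Set (USph n) := fun y => (orthMap n (g y) (hg y)) ⁻¹' U with hO
  have hOopen : ∀ y, IsOpen (O y) := by
    intro y
    have : O y = Subtype.val ⁻¹' ((g y) ⁻¹' S) := rfl
    rw [this]
    exact (((g y).continuous_of_finiteDimensional).comp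
      continuous_subtype_val).isOpen_preimage S hS
  have hcover : Set.univ ⊆ ⋃ y : USph n, O y := by
    intro z _
    refine Set.mem_iUnion.mpr ⟨z, ?_⟩
    show (g z) z.1 ∈ S
    rw [hgx z]; exact hx₀
  obtain ⟨t, ht⟩ := isCompact_univ.elim_finite_subcover O hOopen hcover
  have hmeq : ∀ y, μ (O y) = μ U := by
    intro y
    rw [hO]
    calc μ ((orthMap n (g y) (hg y)) ⁻¹' U)
        = (Measure.map (orthMap n (g y) (hg y)) μ) U := by
          rw [Measure.map_apply (orthMap_measurable n (g y) (hg y)) hUmeas]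
      _ = μ U := by rw [hinv]
  by_contra hcon
  push_neg at hcon
  have hzero : μ U = 0 := le_antisymm hcon zero_le
  have h1 : (1 : ENNReal) = μ Set.univ := (measure_univ).symm
  have hle : μ Set.univ ≤ ∑ y ∈ t, μ (O y) :=
    le_trans (measure_mono ht) (measure_biUnion_finset_le t O)
  rw [← h1] at hle
  simp only [hmeq, hzero, Finset.sum_const, smul_zero] at hle
  exact one_ne_zero (le_antisymm hle zero_le)

/-- two functions with equal fiber cardinalities differ by a permutation -/
lemma exists_perm_comp {α β : Type*} [Fintype α] [DecidableEq α] [DecidableEq β]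
    (f f' : α → β) (h : ∀ i : β, Fintype.card {z // f z = i} = Fintype.card {z // f' z = i}) :
    ∃ σ : Equiv.Perm α, f ∘ σ = f' := by
  have e : ∀ i : β, {z // f' z = i} ≃ {z // f z = i} :=
    fun i => Fintype.equivOfCardEq (h i).symm
  refine ⟨((Equiv.sigmaFiberEquiv f').symm.trans
    ((Equiv.sigmaCongrRight e).trans (Equiv.sigmaFiberEquiv f))), ?_⟩
  funext z
  show f ((e (f' z) ⟨z, rfl⟩).1) = f' z
  exact (e (f' z) ⟨z, rfl⟩).2

lemma prod_X_eq_monomial {n : ℕ} {κ : Type*} [DecidableEq κ] (s : Finset κ) (a : κ → Fin n) :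
    (∏ k ∈ s, (MvPolynomial.X (a k) : MvPolynomial (Fin n) ℝ)) =
      MvPolynomial.monomial (∑ k ∈ s, Finsupp.single (a k) 1) 1 := by
  induction s using Finset.induction with
  | empty => simp
  | @insert k s hk ih =>
      rw [Finset.prod_insert hk, Finset.sum_insert hk, ih, MvPolynomial.X,
        MvPolynomial.monomial_mul, one_mul]

noncomputable def expD (n ℓ : ℕ) (a b : Fin ℓ → Fin n) : Fin n →₀ ℕ :=
  (∑ k : Fin ℓ, Finsupp.single (a k) 1) + (∑ k : Fin ℓ, Finsupp.single (b k) 1)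

lemma single_sum_apply {n ℓ : ℕ} (a : Fin ℓ → Fin n) (i : Fin n) :
    (∑ k : Fin ℓ, Finsupp.single (a k) 1) i = Fintype.card {k // a k = i} := by
  rw [Finsupp.finset_sum_apply, Fintype.card_subtype, Finset.card_filter]
  exact Finset.sum_congr rfl fun k _ => by rw [Finsupp.single_apply]

lemma expD_apply {n ℓ : ℕ} (a b : Fin ℓ → Fin n) (i : Fin n) :
    expD n ℓ a b i = Fintype.card {z : Fin ℓ ⊕ Fin ℓ // Sum.elim a b z = i} := by
  have hR : Fintype.card {z : Fin ℓ ⊕ Fin ℓ // Sum.elim a b z = i}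
      = (∑ k : Fin ℓ, if a k = i then 1 else 0) + (∑ k : Fin ℓ, if b k = i then 1 else 0) := by
    rw [Fintype.card_subtype, Finset.card_filter, Fintype.sum_sum_type]
    simp
    rw [Finset.card_filter, Finset.card_filter]
    convert rfl
    all_goals split_ifs <;> simp [*]
  rw [expD, Finsupp.add_apply, single_sum_apply, single_sum_apply, hR,
    Fintype.card_subtype, Finset.card_filter, Fintype.card_subtype, Finset.card_filter]

/-- the Q-polynomial-function of a matrix, on ambient space -/
noncomputable def qfun (n ℓ : ℕ) (N : Matrix (Fin ℓ → Fin n) (Fin ℓ → Fin n) ℝ)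
    (y : Fin n → ℝ) : ℝ :=
  ∑ a : Fin ℓ → Fin n, ∑ b : Fin ℓ → Fin n, N a b * ((∏ i, y (a i)) * (∏ i, y (b i)))

lemma maxsym_eq_of_expD {n ℓ : ℕ} {N : Matrix (Fin ℓ → Fin n) (Fin ℓ → Fin n) ℝ}
    (hN : MaxSym n ℓ N) {a b a₀ b₀ : Fin ℓ → Fin n} (h : expD n ℓ a b = expD n ℓ a₀ b₀) :
    N a b = N a₀ b₀ := by
  have hcard : ∀ i : Fin n, Fintype.card {z // Sum.elim a b z = i}
      = Fintype.card {z // Sum.elim a₀ b₀ z = i} := by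
    intro i
    rw [← expD_apply, ← expD_apply, h]
  obtain ⟨σ, hσ⟩ := exists_perm_comp (Sum.elim a b) (Sum.elim a₀ b₀) hcard
  have := hN σ (Sum.elim a b)
  rw [hσ] at this
  simpa using this.symm

lemma maxsym_zero_of_qfun_zero {n ℓ : ℕ} {N : Matrix (Fin ℓ → Fin n) (Fin ℓ → Fin n) ℝ}
    (hN : MaxSym n ℓ N) (h : ∀ y : Fin n → ℝ, qfun n ℓ N y = 0) : N = 0 := by
  classical
  set p : MvPolynomial (Fin n) ℝ :=
    ∑ a : Fin ℓ → Fin n, ∑ b : Fin ℓ → Fin n,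
      MvPolynomial.monomial (expD n ℓ a b) (N a b) with hp
  have heval : ∀ y : Fin n → ℝ, MvPolynomial.eval y p = qfun n ℓ N y := by
    intro y
    rw [hp, qfun, map_sum]
    refine Finset.sum_congr rfl fun a _ => ?_
    rw [map_sum]
    refine Finset.sum_congr rfl fun b _ => ?_
    rw [show (MvPolynomial.monomial (expD n ℓ a b) (N a b) : MvPolynomial (Fin n) ℝ)
        = MvPolynomial.C (N a b) * (∏ i, MvPolynomial.X (a i)) *
          (∏ i, MvPolynomial.X (b i)) from by
      rw [prod_X_eq_monomial, prod_X_eq_monomial, MvPolynomial.C_mul_monomial,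
        MvPolynomial.monomial_mul, expD]
      simp]
    simp [mul_assoc]
  have hp0 : p = 0 := by
    apply MvPolynomial.funext
    intro y
    rw [heval y, h y, map_zero]
  ext a₀ b₀
  have hc : MvPolynomial.coeff (expD n ℓ a₀ b₀) p = 0 := by rw [hp0]; simp
  rw [hp, MvPolynomial.coeff_sum] at hc
  simp only [MvPolynomial.coeff_sum, MvPolynomial.coeff_monomial] at hc
  have hrw : ∀ a b : Fin ℓ → Fin n,
      (if expD n ℓ a b = expD n ℓ a₀ b₀ then N a b else 0)
      = (if expD n ℓ a b = expD n ℓ a₀ b₀ then (1:ℝ) else 0) * N a₀ b₀ := by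
    intro a b
    by_cases hd : expD n ℓ a b = expD n ℓ a₀ b₀
    · rw [if_pos hd, if_pos hd, one_mul, maxsym_eq_of_expD hN hd]
    · rw [if_neg hd, if_neg hd, zero_mul]
  rw [Finset.sum_congr rfl (fun a _ => Finset.sum_congr rfl (fun b _ => hrw a b))] at hc
  simp only [← Finset.sum_mul] at hc
  have hpos : (0:ℝ) < ∑ a : Fin ℓ → Fin n, ∑ b : Fin ℓ → Fin n,
      (if expD n ℓ a b = expD n ℓ a₀ b₀ then (1:ℝ) else 0) := by
    apply Finset.sum_pos' (fun a _ => Finset.sum_nonneg fun b _ => by positivity)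
    refine ⟨a₀, Finset.mem_univ _, ?_⟩
    apply Finset.sum_pos' (fun b _ => by positivity)
    exact ⟨b₀, Finset.mem_univ _, by simp⟩
  rcases mul_eq_zero.mp hc with h1 | h1
  · exact absurd h1 (ne_of_gt hpos)
  · simpa using h1

lemma qfun_smul (n ℓ : ℕ) (N : Matrix (Fin ℓ → Fin n) (Fin ℓ → Fin n) ℝ) (s : ℝ)
    (u : Fin n → ℝ) : qfun n ℓ N (fun i => s * u i) = s ^ (2 * ℓ) * qfun n ℓ N u := by
  rw [qfun, qfun, Finset.mul_sum]
  refine Finset.sum_congr rfl fun a _ => ?_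
  rw [Finset.mul_sum]
  refine Finset.sum_congr rfl fun b _ => ?_
  simp only [Finset.prod_mul_distrib, Finset.prod_const, Finset.card_univ, Fintype.card_fin]
  ring

lemma qfun_zero_everywhere (n ℓ : ℕ) (N : Matrix (Fin ℓ → Fin n) (Fin ℓ → Fin n) ℝ)
    (x₀ : USph n) (h : ∀ x : USph n, qfun n ℓ N x.1 = 0) (y : Fin n → ℝ) :
    qfun n ℓ N y = 0 := by
  by_cases hr : (∑ i, y i ^ 2) = 0
  · have hy : ∀ i, y i = 0 := by
      intro i
      have h1 : y i ^ 2 ≤ ∑ j, y j ^ 2 :=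
        Finset.single_le_sum (f := fun j => y j ^ 2) (fun j _ => sq_nonneg _)
          (Finset.mem_univ i)
      rw [hr] at h1
      nlinarith [sq_nonneg (y i)]
    rcases Nat.eq_zero_or_pos ℓ with hℓ | hℓ
    · subst hℓ
      have := h x₀
      rw [qfun] at this ⊢
      simpa using this
    · rw [qfun]
      have : ∀ a : Fin ℓ → Fin n, (∏ i, y (a i)) = 0 := by
        intro a
        rw [Finset.prod_congr rfl fun i _ => hy (a i), Finset.prod_const, zero_pow]
        simp only [Finset.card_univ, Fintype.card_fin]
        omega
      refine Finset.sum_eq_zero fun a _ => Finset.sum_eq_zero fun b _ => ?_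
      rw [this a, zero_mul, mul_zero]
  · have hrpos : 0 < ∑ i, y i ^ 2 :=
      lt_of_le_of_ne (Finset.sum_nonneg fun i _ => sq_nonneg _) (Ne.symm hr)
    set s : ℝ := Real.sqrt (∑ i, y i ^ 2) with hs
    have hs0 : s ≠ 0 := by rw [hs]; exact ne_of_gt (Real.sqrt_pos.mpr hrpos)
    have hu : ∑ i, (y i / s) ^ 2 = 1 := by
      rw [Finset.sum_congr rfl fun i _ => div_pow (y i) s 2]
      rw [← Finset.sum_div, hs, Real.sq_sqrt (le_of_lt hrpos)]
      field_simp
    have hy : y = fun i => s * (y i / s) := by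
      funext i; field_simp
    calc qfun n ℓ N y = qfun n ℓ N (fun i => s * (y i / s)) := by rw [← hy]
      _ = s ^ (2 * ℓ) * qfun n ℓ N (fun i => y i / s) := qfun_smul n ℓ N s _
      _ = 0 := by rw [h ⟨fun i => y i / s, hu⟩, mul_zero]

-- analytic facts
lemma qcomp_measurable (n ℓ : ℕ) (N : Matrix (Fin ℓ → Fin n) (Fin ℓ → Fin n) ℝ) :
    Measurable (fun x : USph n => qfun n ℓ N x.1) := by
  apply Finset.measurable_sum
  intro a _
  apply Finset.measurable_sum
  intro b _
  apply Measurable.const_mul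
  apply Measurable.mul <;>
  · apply Finset.measurable_prod
    intro i _
    exact (measurable_pi_apply _).comp measurable_subtype_coe

lemma abs_prod_le_one {n ℓ : ℕ} (a : Fin ℓ → Fin n) (x : USph n) : |∏ i, x.1 (a i)| ≤ 1 := by
  rw [Finset.abs_prod]
  exact Finset.prod_le_one (fun i _ => abs_nonneg _) (fun i _ => abs_coord_le x.1 x.2 (a i))

lemma abs_pprod_le_one {n ℓ : ℕ} (a b : Fin ℓ → Fin n) (x : USph n) :
    |(∏ i, x.1 (a i)) * (∏ i, x.1 (b i))| ≤ 1 := by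
  rw [abs_mul]
  calc |∏ i, x.1 (a i)| * |∏ i, x.1 (b i)| ≤ 1 * 1 :=
    mul_le_mul (abs_prod_le_one a x) (abs_prod_le_one b x) (abs_nonneg _) zero_le_one
  _ = 1 := one_mul 1

lemma qcomp_abs_le (n ℓ : ℕ) (N : Matrix (Fin ℓ → Fin n) (Fin ℓ → Fin n) ℝ) (x : USph n) :
    |qfun n ℓ N x.1| ≤ ∑ a : Fin ℓ → Fin n, ∑ b : Fin ℓ → Fin n, |N a b| := by
  refine le_trans (Finset.abs_sum_le_sum_abs _ _) (Finset.sum_le_sum fun a _ => ?_)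
  refine le_trans (Finset.abs_sum_le_sum_abs _ _) (Finset.sum_le_sum fun b _ => ?_)
  rw [abs_mul]
  calc |N a b| * |(∏ i, x.1 (a i)) * (∏ i, x.1 (b i))|
      ≤ |N a b| * 1 := mul_le_mul_of_nonneg_left (abs_pprod_le_one a b x) (abs_nonneg _)
    _ = |N a b| := mul_one _

section WithMeasure

variable {n ℓ : ℕ} (μ : Measure (USph n)) [IsProbabilityMeasure μ]

lemma memLp_of_bdd {f : USph n → ℝ} (hf : Measurable f) (C : ℝ) (hC : ∀ x, |f x| ≤ C)
    (p : ENNReal) : MemLp f p μ :=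
  MemLp.of_bound hf.aestronglyMeasurable C (Filter.Eventually.of_forall (by simpa using hC))

lemma integrable_of_bdd {f : USph n → ℝ} (hf : Measurable f) (C : ℝ) (hC : ∀ x, |f x| ≤ C) :
    Integrable f μ :=
  memLp_one_iff_integrable.mp (memLp_of_bdd μ hf C hC 1)

end WithMeasure

end AuxStmt12

section MainStmt12

lemma qfun_addM {n ℓ : ℕ} (N N' : Matrix (Fin ℓ → Fin n) (Fin ℓ → Fin n) ℝ) (y : Fin n → ℝ) :
    qfun n ℓ (N + N') y = qfun n ℓ N y + qfun n ℓ N' y := by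
  simp only [qfun, Matrix.add_apply, add_mul, Finset.sum_add_distrib]

lemma qfun_smulM {n ℓ : ℕ} (c : ℝ) (N : Matrix (Fin ℓ → Fin n) (Fin ℓ → Fin n) ℝ)
    (y : Fin n → ℝ) : qfun n ℓ (c • N) y = c * qfun n ℓ N y := by
  simp only [qfun, Matrix.smul_apply, smul_eq_mul, mul_assoc, ← Finset.mul_sum]

lemma pprod_measurable {n ℓ : ℕ} (a b : Fin ℓ → Fin n) :
    Measurable (fun x : USph n => (∏ i, x.1 (a i)) * (∏ i, x.1 (b i))) := by
  apply Measurable.mul <;>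
  · apply Finset.measurable_prod
    intro i _
    exact (measurable_pi_apply _).comp measurable_subtype_coe

variable (n ℓ : ℕ) (μ : Measure (USph n)) [IsProbabilityMeasure μ]

lemma qpp_integrable (N : Matrix (Fin ℓ → Fin n) (Fin ℓ → Fin n) ℝ) (c : ℝ)
    (a b : Fin ℓ → Fin n) :
    Integrable (fun x : USph n =>
      c * (qfun n ℓ N x.1 * ((∏ i, x.1 (a i)) * (∏ i, x.1 (b i))))) μ := by
  apply integrable_of_bdd μ (((qcomp_measurable n ℓ N).mul (pprod_measurable a b)).const_mul c)
    (|c| * (∑ a' : Fin ℓ → Fin n, ∑ b' : Fin ℓ → Fin n, |N a' b'|))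
  intro x
  show |c * (qfun n ℓ N x.1 * ((∏ i, x.1 (a i)) * (∏ i, x.1 (b i))))| ≤ _
  rw [abs_mul, abs_mul]
  have h1 : |qfun n ℓ N x.1| * |(∏ i, x.1 (a i)) * (∏ i, x.1 (b i))|
      ≤ (∑ a' : Fin ℓ → Fin n, ∑ b' : Fin ℓ → Fin n, |N a' b'|) * 1 :=
    mul_le_mul (qcomp_abs_le n ℓ N x) (abs_pprod_le_one a b x) (abs_nonneg _)
      (Finset.sum_nonneg fun a' _ => Finset.sum_nonneg fun b' _ => abs_nonneg _)
  rw [mul_one] at h1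
  exact mul_le_mul_of_nonneg_left h1 (abs_nonneg c)

/-- the linear endomorphism `N ↦ ∫ Q_N(x) |x⟩⟨x|^{⊗ℓ} dμ` -/
noncomputable def Tmat : Matrix (Fin ℓ → Fin n) (Fin ℓ → Fin n) ℝ →ₗ[ℝ]
    Matrix (Fin ℓ → Fin n) (Fin ℓ → Fin n) ℝ where
  toFun N := SMat n ℓ μ (fun x => qfun n ℓ N x.1)
  map_add' N N' := by
    ext a b
    show (∫ x : USph n, qfun n ℓ (N + N') x.1 * _ ∂μ) = _
    rw [show (fun x : USph n => qfun n ℓ (N + N') x.1 * ((∏ i, x.1 (a i)) * (∏ i, x.1 (b i))))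
        = fun x : USph n => 1 * (qfun n ℓ N x.1 * ((∏ i, x.1 (a i)) * (∏ i, x.1 (b i))))
          + 1 * (qfun n ℓ N' x.1 * ((∏ i, x.1 (a i)) * (∏ i, x.1 (b i)))) from
      funext fun x => by rw [qfun_addM]; ring]
    rw [integral_add (qpp_integrable n ℓ μ N 1 a b) (qpp_integrable n ℓ μ N' 1 a b)]
    simp only [one_mul]
    rfl
  map_smul' c N := by
    ext a b
    show (∫ x : USph n, qfun n ℓ (c • N) x.1 * _ ∂μ) = _
    rw [show (fun x : USph n => qfun n ℓ (c • N) x.1 * ((∏ i, x.1 (a i)) * (∏ i, x.1 (b i))))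
        = fun x : USph n => c * (qfun n ℓ N x.1 * ((∏ i, x.1 (a i)) * (∏ i, x.1 (b i)))) from
      funext fun x => by rw [qfun_smulM]; ring]
    rw [integral_const_mul]
    rfl

lemma inner_Tmat (M N : Matrix (Fin ℓ → Fin n) (Fin ℓ → Fin n) ℝ) :
    ∑ a : Fin ℓ → Fin n, ∑ b : Fin ℓ → Fin n, M a b * (Tmat n ℓ μ N) a b
      = ∫ x : USph n, qfun n ℓ M x.1 * qfun n ℓ N x.1 ∂μ := by
  have hstep : ∀ a b : Fin ℓ → Fin n, M a b * (Tmat n ℓ μ N) a b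
      = ∫ x : USph n, M a b * (qfun n ℓ N x.1 * ((∏ i, x.1 (a i)) * (∏ i, x.1 (b i)))) ∂μ := by
    intro a b
    rw [integral_const_mul]
    rfl
  rw [Finset.sum_congr rfl fun a _ => Finset.sum_congr rfl fun b _ => hstep a b]
  rw [Finset.sum_congr rfl fun a (_ : a ∈ Finset.univ) =>
    (integral_finset_sum Finset.univ fun b _ => qpp_integrable n ℓ μ N (M a b) a b).symm]
  rw [← integral_finset_sum Finset.univ fun a _ =>
    integrable_finset_sum Finset.univ fun b _ => qpp_integrable n ℓ μ N (M a b) a b]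
  congr 1
  funext x
  rw [show qfun n ℓ M x.1 = ∑ a : Fin ℓ → Fin n, ∑ b : Fin ℓ → Fin n,
      M a b * ((∏ i, x.1 (a i)) * (∏ i, x.1 (b i))) from rfl, Finset.sum_mul]
  refine Finset.sum_congr rfl fun a _ => ?_
  rw [Finset.sum_mul]
  refine Finset.sum_congr rfl fun b _ => ?_
  ring

/-- the submodule of maximally symmetric matrices -/
def maxSymSub : Submodule ℝ (Matrix (Fin ℓ → Fin n) (Fin ℓ → Fin n) ℝ) where
  carrier := {A | MaxSym n ℓ A}
  add_mem' := by
    intro A B hA hB σ f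
    simp only [Matrix.add_apply]
    rw [hA σ f, hB σ f]
  zero_mem' := by intro σ f; simp
  smul_mem' := by
    intro c A hA σ f
    simp only [Matrix.smul_apply]
    rw [hA σ f]

lemma phiF_eq_prod (f : Fin ℓ ⊕ Fin ℓ → Fin n) (x : USph n) :
    (∏ i, x.1 ((f ∘ Sum.inl) i)) * (∏ i, x.1 ((f ∘ Sum.inr) i))
      = ∏ z : Fin ℓ ⊕ Fin ℓ, x.1 (f z) := by
  rw [Fintype.prod_sum_type]
  rfl

lemma smat_maxSym (f : USph n → ℝ) : MaxSym n ℓ (SMat n ℓ μ f) := by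
  intro σ f0
  show (∫ x : USph n, f x * _ ∂μ) = ∫ x : USph n, f x * _ ∂μ
  congr 1
  funext x
  rw [phiF_eq_prod n ℓ (f0 ∘ σ) x, phiF_eq_prod n ℓ f0 x]
  congr 1
  exact Equiv.prod_comp σ (fun z => x.1 (f0 z))

/-- restriction of `Tmat` to the maximally symmetric subspace -/
noncomputable def Tres : maxSymSub n ℓ →ₗ[ℝ] maxSymSub n ℓ :=
  LinearMap.codRestrict (maxSymSub n ℓ) ((Tmat n ℓ μ).domRestrict (maxSymSub n ℓ))
    (fun N => smat_maxSym n ℓ μ _)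

lemma Tres_injective
    (hinv : ∀ (g : (Fin n → ℝ) →ₗ[ℝ] (Fin n → ℝ))
      (hg : ∀ x : Fin n → ℝ, ∑ i, g x i ^ 2 = ∑ i, x i ^ 2),
      Measure.map (orthMap n g hg) μ = μ) (x₀ : USph n) :
    Function.Injective (Tres n ℓ μ) := by
  rw [injective_iff_map_eq_zero]
  intro N hN0
  have hT0 : Tmat n ℓ μ N.1 = 0 := congrArg Subtype.val hN0
  have h0 : (∫ x : USph n, qfun n ℓ N.1 x.1 * qfun n ℓ N.1 x.1 ∂μ) = 0 := by
    rw [← inner_Tmat n ℓ μ N.1 N.1, hT0]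
    simp
  have hsq : (fun x : USph n => qfun n ℓ N.1 x.1 * qfun n ℓ N.1 x.1)
      = fun x : USph n => (qfun n ℓ N.1 x.1) ^ 2 := funext fun x => (sq _).symm
  rw [hsq] at h0
  have hint : Integrable (fun x : USph n => (qfun n ℓ N.1 x.1) ^ 2) μ := by
    apply integrable_of_bdd μ ((qcomp_measurable n ℓ N.1).pow_const 2)
      ((∑ a : Fin ℓ → Fin n, ∑ b : Fin ℓ → Fin n, |N.1 a b|) ^ 2)
    intro x
    rw [abs_pow]
    exact pow_le_pow_left₀ (abs_nonneg _) (qcomp_abs_le n ℓ N.1 x) 2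
  have hae := (integral_eq_zero_iff_of_nonneg (fun x => sq_nonneg _) hint).mp h0
  have hae' : ∀ᵐ x ∂μ, qfun n ℓ N.1 x.1 = 0 := by
    filter_upwards [hae] with x hx
    exact (pow_eq_zero_iff two_ne_zero).mp hx
  -- a.e. zero implies everywhere zero on the sphere
  have hzeroS : ∀ x : USph n, qfun n ℓ N.1 x.1 = 0 := by
    by_contra hcon
    push_neg at hcon
    obtain ⟨x', hx'⟩ := hcon
    have hcont : Continuous (qfun n ℓ N.1) := by
      apply continuous_finset_sum
      intro a _
      apply continuous_finset_sum
      intro b _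
      exact continuous_const.mul
        ((continuous_finset_prod Finset.univ (fun i _ => continuous_apply (a i))).mul
          (continuous_finset_prod Finset.univ (fun i _ => continuous_apply (b i))))
    have hS : IsOpen {y : Fin n → ℝ | qfun n ℓ N.1 y ≠ 0} :=
      isOpen_compl_singleton.preimage hcont
    have hpos := meas_pos_of_open n μ hinv _ hS x' hx'
    have hzero : μ (Subtype.val ⁻¹' {y : Fin n → ℝ | qfun n ℓ N.1 y ≠ 0}) = 0 := by
      have := MeasureTheory.ae_iff.mp hae'
      exact this
    rw [hzero] at hpos
    exact lt_irrefl 0 hpos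
  have hzeroAll : ∀ y : Fin n → ℝ, qfun n ℓ N.1 y = 0 :=
    qfun_zero_everywhere n ℓ N.1 x₀ hzeroS
  have := maxsym_zero_of_qfun_zero N.2 hzeroAll
  exact Subtype.ext this

end MainStmt12

/-- Every maximally symmetric matrix `M` on `(ℝⁿ)^{⊗ℓ}` admits a P-representation:
there is a square-integrable function `P_M` on `S^(n-1)` with
`M = ∫_{S^(n-1)} P_M(x) |x⟩⟨x|^{⊗ℓ} dx` (w.r.t. the uniform probability measure). -/
theorem stmt12 (n ℓ : ℕ)
    (μ : Measure (USph n)) [IsProbabilityMeasure μ]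
    (hinv : ∀ (g : (Fin n → ℝ) →ₗ[ℝ] (Fin n → ℝ))
      (hg : ∀ x : Fin n → ℝ, ∑ i, g x i ^ 2 = ∑ i, x i ^ 2),
      Measure.map (orthMap n g hg) μ = μ)
    (M : Matrix (Fin ℓ → Fin n) (Fin ℓ → Fin n) ℝ) (hM : MaxSym n ℓ M) :
    ∃ P : USph n → ℝ, MemLp P 2 μ ∧
      ∀ a b : Fin ℓ → Fin n,
        M a b = ∫ x : USph n, P x * ((∏ i, x.1 (a i)) * (∏ i, x.1 (b i))) ∂μ := by
  classical
  have hneS : Nonempty (USph n) := by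
    by_contra hcon
    rw [not_nonempty_iff] at hcon
    have h0 : μ Set.univ = 0 := by
      rw [Set.univ_eq_empty_iff.mpr hcon]
      exact measure_empty
    rw [measure_univ] at h0
    exact one_ne_zero h0
  obtain ⟨x₀⟩ := hneS
  have hinj := Tres_injective n ℓ μ hinv x₀
  have hsurj := LinearMap.injective_iff_surjective.mp hinj
  obtain ⟨N, hN⟩ := hsurj ⟨M, hM⟩
  refine ⟨fun x => qfun n ℓ N.1 x.1, memLp_of_bdd μ (qcomp_measurable n ℓ N.1) _
    (qcomp_abs_le n ℓ N.1) 2, ?_⟩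
  intro a b
  have h1 : Tmat n ℓ μ N.1 = M := congrArg Subtype.val hN
  rw [← h1]
  rfl
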